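/- Let K be a field of characteristic 0 and P = K[x₁,x₂,x₃,x₄,x₅]. Define derivations Y₁ = ∂₁ + x₃∂₄, Y₂ = ∂₂ − x₁∂₃ − (x₁²/2)∂₄ + x₃∂₅ of P. For a derivation Z of P, define the polynomials f¹ = Z(x₁), f² = Z(x₂), f³ = Z(x₃) + x₁·Z(x₂), f⁴ = Z(x₄) − x₃·Z(x₁) + (x₁²/2)·Z(x₂), f⁵ = Z(x₅) − x₃·Z(x₂). Then Z preserves the distribution D, i.e., [Z, Y₁] and [Z, Y₂] lie in the P-submodule P·Y₁ + P·Y₂ of the module of derivations of P, if and only if the following six equations hold: Y₁(f³) = f², Y₂(f³) = −f¹, Y₁(f⁴) = f³, Y₂(f⁴) = 0, Y₁(f⁵) = 0, Y₂(f⁵) = f³. In particular, such a Z is completely determined by the two generating functions f⁴ and f⁵, which satisfy Y₁(f⁵) = 0, Y₂(f⁴) = 0, Y₁(f⁴) = Y₂(f⁵). -/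

import Mathlib

open MvPolynomial

noncomputable section

/-- The polynomial ring `K[x₁,…,x₅]`. -/
abbrev P5 (K : Type*) [Field K] := MvPolynomial (Fin 5) K

/-- Polynomial vector fields on 5-dimensional space: derivations of `K[x₁,…,x₅]`. -/
abbrev Der5 (K : Type*) [Field K] := Derivation K (P5 K) (P5 K)

variable (K : Type*) [Field K] [CharZero K]

/-- `∂ᵢ` as a derivation (0-indexed). -/
def dd (i : Fin 5) : Der5 K := pderiv i

/-- The variable `xᵢ` (0-indexed). -/
def xx (i : Fin 5) : P5 K := X i

/-- `Y₁ = ∂₁ + x₃∂₄`. -/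
def Y1 : Der5 K := dd K 0 + xx K 2 • dd K 3

/-- `Y₂ = ∂₂ − x₁∂₃ − (x₁²/2)∂₄ + x₃∂₅`. -/
def Y2 : Der5 K :=
  dd K 1 - xx K 0 • dd K 2 - (C ((2 : K)⁻¹) * xx K 0 ^ 2) • dd K 3
    + xx K 2 • dd K 4

/-- The distribution `D`: the `P`-submodule `P·Y₁ + P·Y₂` of the module of
derivations of `P`. -/
def DistD : Submodule (P5 K) (Der5 K) :=
  Submodule.span (P5 K) {Y1 K, Y2 K}

/-- A derivation `Z` preserves the distribution `D` if `[Z,Y₁]` and `[Z,Y₂]`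
lie in `P·Y₁ + P·Y₂`. -/
def Preserves (Z : Der5 K) : Prop :=
  ⁅Z, Y1 K⁆ ∈ DistD K ∧ ⁅Z, Y2 K⁆ ∈ DistD K

/-- `f¹ = Z(x₁)`. -/
def f1 (Z : Der5 K) : P5 K := Z (xx K 0)
/-- `f² = Z(x₂)`. -/
def f2 (Z : Der5 K) : P5 K := Z (xx K 1)
/-- `f³ = Z(x₃) + x₁·Z(x₂)`. -/
def f3 (Z : Der5 K) : P5 K := Z (xx K 2) + xx K 0 * Z (xx K 1)
/-- `f⁴ = Z(x₄) − x₃·Z(x₁) + (x₁²/2)·Z(x₂)`. -/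
def f4 (Z : Der5 K) : P5 K :=
  Z (xx K 3) - xx K 2 * Z (xx K 0) + C ((2 : K)⁻¹) * xx K 0 ^ 2 * Z (xx K 1)
/-- `f⁵ = Z(x₅) − x₃·Z(x₂)`. -/
def f5 (Z : Der5 K) : P5 K := Z (xx K 4) - xx K 2 * Z (xx K 1)


section Helpers

@[simp] lemma Y1_X0 : Y1 K (X 0) = 1 := by simp [Y1, dd, xx, pderiv_X]
@[simp] lemma Y1_X1 : Y1 K (X 1) = 0 := by simp [Y1, dd, xx, pderiv_X]
@[simp] lemma Y1_X2 : Y1 K (X 2) = 0 := by simp [Y1, dd, xx, pderiv_X]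
@[simp] lemma Y1_X3 : Y1 K (X 3) = X 2 := by simp [Y1, dd, xx, pderiv_X]
@[simp] lemma Y1_X4 : Y1 K (X 4) = 0 := by simp [Y1, dd, xx, pderiv_X]
@[simp] lemma Y2_X0 : Y2 K (X 0) = 0 := by simp [Y2, dd, xx, pderiv_X]
@[simp] lemma Y2_X1 : Y2 K (X 1) = 1 := by simp [Y2, dd, xx, pderiv_X]
@[simp] lemma Y2_X2 : Y2 K (X 2) = -X 0 := by simp [Y2, dd, xx, pderiv_X]
@[simp] lemma Y2_X3 : Y2 K (X 3) = -(C ((2:K)⁻¹) * X 0 ^ 2) := by simp [Y2, dd, xx, pderiv_X]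
@[simp] lemma Y2_X4 : Y2 K (X 4) = X 2 := by simp [Y2, dd, xx, pderiv_X]

@[simp] lemma D_C (D : Der5 K) (a : K) : D (C a) = 0 := by simp

lemma two_inv_C : (C ((2:K)⁻¹) : P5 K) * 2 = 1 := by
  rw [show ((2 : P5 K)) = C (2:K) from (map_ofNat C 2).symm, ← C_mul,
    inv_mul_cancel₀ two_ne_zero, C_1]

lemma mem_distD_iff (W : Der5 K) : W ∈ DistD K ↔
    (W (X 2) = -(X 0 * W (X 1)) ∧
     W (X 3) = X 2 * W (X 0) - C ((2:K)⁻¹) * X 0 ^ 2 * W (X 1) ∧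
     W (X 4) = X 2 * W (X 1)) := by
  rw [DistD, Submodule.mem_span_pair]
  constructor
  · rintro ⟨a, b, rfl⟩
    refine ⟨?_, ?_, ?_⟩ <;>
      simp [Derivation.add_apply, Derivation.smul_apply, smul_eq_mul] <;> ring
  · rintro ⟨h2, h3, h4⟩
    refine ⟨W (X 0), W (X 1), ?_⟩
    apply MvPolynomial.derivation_ext
    intro i
    fin_cases i <;>
      simp [Derivation.add_apply, Derivation.smul_apply, smul_eq_mul, h2, h3, h4] <;> ring

lemma iff1 (Z : Der5 K) :
    ⁅Z, Y1 K⁆ (X 2) = -(X 0 * ⁅Z, Y1 K⁆ (X 1)) ↔ Y1 K (f3 K Z) = f2 K Z := by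
  simp [f3, f2, xx, Derivation.commutator_apply, Derivation.map_one_eq_zero, map_add,
    Derivation.leibniz,
    smul_eq_mul, Y1_X0, Y1_X1, Y1_X2, map_zero, map_one, mul_one, mul_zero, add_zero, zero_sub]
  constructor <;> intro h <;> linear_combination -h

lemma iff2 (Z : Der5 K) :
    ⁅Z, Y1 K⁆ (X 3) = X 2 * ⁅Z, Y1 K⁆ (X 0) - C ((2:K)⁻¹) * X 0 ^ 2 * ⁅Z, Y1 K⁆ (X 1) ↔
      Y1 K (f4 K Z) = f3 K Z := by
  simp [f4, f3, xx, Derivation.commutator_apply, Derivation.map_one_eq_zero, map_add, map_sub,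
    Derivation.leibniz,
    smul_eq_mul, Y1_X0, Y1_X1, Y1_X2, Y1_X3, map_zero, map_one, mul_one, mul_zero, add_zero,
    zero_sub, sub_zero, Derivation.leibniz_pow]
  constructor <;> intro h <;>
    first
    | linear_combination h
    | linear_combination -h
    | linear_combination h + X 0 * Z (X 1) * two_inv_C K
    | linear_combination -h + X 0 * Z (X 1) * two_inv_C K
    | linear_combination h - X 0 * Z (X 1) * two_inv_C K
    | linear_combination -h - X 0 * Z (X 1) * two_inv_C K
    | linear_combination h + X 0 * Z (X 0) * two_inv_C K
    | linear_combination -h + X 0 * Z (X 0) * two_inv_C K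
    | linear_combination h - X 0 * Z (X 0) * two_inv_C K
    | linear_combination -h - X 0 * Z (X 0) * two_inv_C K

lemma iff3 (Z : Der5 K) :
    ⁅Z, Y1 K⁆ (X 4) = X 2 * ⁅Z, Y1 K⁆ (X 1) ↔ Y1 K (f5 K Z) = 0 := by
  simp [f5, xx, Derivation.commutator_apply, Derivation.map_one_eq_zero, map_sub,
    Derivation.leibniz,
    smul_eq_mul, Y1_X1, Y1_X2, Y1_X4, map_zero, mul_zero, add_zero, zero_sub, sub_zero]
  constructor <;> intro h <;> first | linear_combination h | linear_combination -h

lemma iff4 (Z : Der5 K) :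
    ⁅Z, Y2 K⁆ (X 2) = -(X 0 * ⁅Z, Y2 K⁆ (X 1)) ↔ Y2 K (f3 K Z) = -f1 K Z := by
  simp [f3, f1, xx, Derivation.commutator_apply, Derivation.map_one_eq_zero, map_add, map_neg,
    Derivation.leibniz,
    smul_eq_mul, Y2_X0, Y2_X1, Y2_X2, map_zero, map_one, mul_one, mul_zero, add_zero, zero_sub]
  constructor <;> intro h <;> first | linear_combination h | linear_combination -h

lemma iff5 (Z : Der5 K) :
    ⁅Z, Y2 K⁆ (X 3) = X 2 * ⁅Z, Y2 K⁆ (X 0) - C ((2:K)⁻¹) * X 0 ^ 2 * ⁅Z, Y2 K⁆ (X 1) ↔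
      Y2 K (f4 K Z) = 0 := by
  simp [f4, xx, Derivation.commutator_apply, Derivation.map_one_eq_zero, map_add, map_sub,
    map_neg, Derivation.leibniz,
    smul_eq_mul, Y2_X0, Y2_X1, Y2_X2, Y2_X3, map_zero, map_one, mul_one, mul_zero, add_zero,
    zero_sub, sub_zero, Derivation.leibniz_pow]
  constructor <;> intro h <;>
    first
    | linear_combination h
    | linear_combination -h
    | linear_combination h + X 0 * Z (X 1) * two_inv_C K
    | linear_combination -h + X 0 * Z (X 1) * two_inv_C K
    | linear_combination h - X 0 * Z (X 1) * two_inv_C K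
    | linear_combination -h - X 0 * Z (X 1) * two_inv_C K
    | linear_combination h + X 0 * Z (X 0) * two_inv_C K
    | linear_combination -h + X 0 * Z (X 0) * two_inv_C K
    | linear_combination h - X 0 * Z (X 0) * two_inv_C K
    | linear_combination -h - X 0 * Z (X 0) * two_inv_C K

lemma iff6 (Z : Der5 K) :
    ⁅Z, Y2 K⁆ (X 4) = X 2 * ⁅Z, Y2 K⁆ (X 1) ↔ Y2 K (f5 K Z) = f3 K Z := by
  simp [f5, f3, xx, Derivation.commutator_apply, Derivation.map_one_eq_zero, map_add, map_sub,
    Derivation.leibniz,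
    smul_eq_mul, Y2_X1, Y2_X2, Y2_X4, map_zero, map_one, mul_one, mul_zero, add_zero, zero_sub,
    sub_zero]
  constructor <;> intro h <;> first | linear_combination h | linear_combination -h

end Helpers

set_option maxHeartbeats 1000000 in

/-- a derivation `Z` preserves the distribution `D` iff its
coordinates `f¹,…,f⁵` satisfy the six equations `Y₁(f³) = f²`, `Y₂(f³) = −f¹`,
`Y₁(f⁴) = f³`, `Y₂(f⁴) = 0`, `Y₁(f⁵) = 0`, `Y₂(f⁵) = f³`; in particular such a
`Z` is completely determined by the generating functions `f⁴` and `f⁵`. -/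
theorem preserves_iff_generating_equations :
    (∀ Z : Der5 K,
      Preserves K Z ↔
        (Y1 K (f3 K Z) = f2 K Z ∧ Y2 K (f3 K Z) = -f1 K Z ∧
         Y1 K (f4 K Z) = f3 K Z ∧ Y2 K (f4 K Z) = 0 ∧
         Y1 K (f5 K Z) = 0 ∧ Y2 K (f5 K Z) = f3 K Z)) ∧
    (∀ Z W : Der5 K, Preserves K Z → Preserves K W →
      f4 K Z = f4 K W → f5 K Z = f5 K W → Z = W) := by
  have main : ∀ Z : Der5 K,
      Preserves K Z ↔
        (Y1 K (f3 K Z) = f2 K Z ∧ Y2 K (f3 K Z) = -f1 K Z ∧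
         Y1 K (f4 K Z) = f3 K Z ∧ Y2 K (f4 K Z) = 0 ∧
         Y1 K (f5 K Z) = 0 ∧ Y2 K (f5 K Z) = f3 K Z) := by
    intro Z
    rw [Preserves, mem_distD_iff, mem_distD_iff, iff1, iff2, iff3, iff4, iff5, iff6]
    exact ⟨fun ⟨⟨a1, a2, a3⟩, ⟨b1, b2, b3⟩⟩ => ⟨a1, b1, a2, b2, a3, b3⟩,
      fun ⟨a1, b1, a2, b2, a3, b3⟩ => ⟨⟨a1, a2, a3⟩, ⟨b1, b2, b3⟩⟩⟩
  refine ⟨main, ?_⟩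
  intro Z W hZ hW h4 h5
  obtain ⟨e1Z, e2Z, e3Z, -, -, -⟩ := (main Z).mp hZ
  obtain ⟨e1W, e2W, e3W, -, -, -⟩ := (main W).mp hW
  have h3 : f3 K Z = f3 K W := by rw [← e3Z, ← e3W, h4]
  have h2 : f2 K Z = f2 K W := by rw [← e1Z, ← e1W, h3]
  have h1 : f1 K Z = f1 K W := by
    rw [← neg_neg (f1 K Z), ← e2Z, h3, e2W, neg_neg]
  simp only [f1, f2, f3, f4, f5, xx] at h1 h2 h3 h4 h5
  apply MvPolynomial.derivation_ext
  intro i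
  fin_cases i
  · exact h1
  · exact h2
  · show Z (X 2) = W (X 2)
    linear_combination h3 - X 0 * h2
  · show Z (X 3) = W (X 3)
    linear_combination h4 + X 2 * h1 - C ((2:K)⁻¹) * X 0 ^ 2 * h2
  · show Z (X 4) = W (X 4)
    linear_combination h5 + X 2 * h2

end
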